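/- Let L be a metabelian Leibniz algebra and let U be a maximal nilpotent subalgebra of L. Then U ∩ L² is an abelian ideal of L, and L² = (U ∩ L²) ⊕ K where K is an ideal of L with [K,U] = K. -/

import Mathlib

/-- A (right) Leibniz algebra structure on an `F`-vector space `L`:
a bilinear bracket satisfying `[x,[y,z]] = [[x,y],z] - [[x,z],y]`. -/
structure LeibnizAlg (F : Type*) (L : Type*) [Field F] [AddCommGroup L] [Module F L] where
  bracket : L →ₗ[F] L →ₗ[F] L
  leibniz : ∀ x y z : L,
    bracket x (bracket y z) = bracket (bracket x y) z - bracket (bracket x z) y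

namespace LeibnizAlg

variable {F : Type*} {L : Type*} [Field F] [AddCommGroup L] [Module F L]

/-- The product `[M, N]` of two subspaces: the span of all brackets `[m, n]`. -/
def prod (A : LeibnizAlg F L) (M N : Submodule F L) : Submodule F L :=
  Submodule.span F {z : L | ∃ m ∈ M, ∃ n ∈ N, z = A.bracket m n}

/-- A subalgebra: a subspace closed under the product. -/
def IsSubalgebra (A : LeibnizAlg F L) (S : Submodule F L) : Prop :=
  A.prod S S ≤ S

/-- A (two-sided) ideal: `[I, L] ⊆ I` and `[L, I] ⊆ I`. -/
def IsIdeal (A : LeibnizAlg F L) (I : Submodule F L) : Prop :=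
  A.prod I ⊤ ≤ I ∧ A.prod ⊤ I ≤ I

/-- Lower central series of a subspace `U`: `lcs U 0 = U = U¹`,
`lcs U k = U^(k+1)`, i.e. `lcs U (k+1) = [lcs U k, U]`. -/
def lcs (A : LeibnizAlg F L) (U : Submodule F L) : ℕ → Submodule F L
  | 0 => U
  | k + 1 => A.prod (lcs A U k) U

/-- `U` is nilpotent: `U^(n+1) = 0` for some `n`. -/
def IsNilpotentSub (A : LeibnizAlg F L) (U : Submodule F L) : Prop :=
  ∃ n : ℕ, A.lcs U n = ⊥

/-- `U` is abelian: `[U, U] = 0`. -/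
def IsAbelian (A : LeibnizAlg F L) (U : Submodule F L) : Prop :=
  A.prod U U = ⊥

/-- An `A`-algebra: every nilpotent subalgebra is abelian. -/
def IsAAlgebra (A : LeibnizAlg F L) : Prop :=
  ∀ U : Submodule F L, A.IsSubalgebra U → A.IsNilpotentSub U → A.IsAbelian U

/-- Derived series: `derSeries 0 = L`, `derSeries (k+1) = [derSeries k, derSeries k]`. -/
def derSeries (A : LeibnizAlg F L) : ℕ → Submodule F L
  | 0 => ⊤
  | k + 1 => A.prod (derSeries A k) (derSeries A k)

/-- `L` is solvable: some term of the derived series vanishes. -/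
def IsSolvable (A : LeibnizAlg F L) : Prop :=
  ∃ n : ℕ, A.derSeries n = ⊥

/-- The centralizer `Z_L(U)` of a subspace `U`. -/
def centralizer (A : LeibnizAlg F L) (U : Submodule F L) : Submodule F L where
  carrier := {x : L | ∀ u ∈ U, A.bracket x u = 0 ∧ A.bracket u x = 0}
  add_mem' := by
    intro a b ha hb u hu
    refine ⟨?_, ?_⟩
    · rw [map_add, LinearMap.add_apply, (ha u hu).1, (hb u hu).1, add_zero]
    · rw [map_add, (ha u hu).2, (hb u hu).2, add_zero]
  zero_mem' := by
    intro u hu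
    refine ⟨?_, ?_⟩
    · rw [map_zero, LinearMap.zero_apply]
    · rw [map_zero]
  smul_mem' := by
    intro c a ha u hu
    refine ⟨?_, ?_⟩
    · rw [map_smul, LinearMap.smul_apply, (ha u hu).1, smul_zero]
    · rw [map_smul, (ha u hu).2, smul_zero]

/-- The centre of the subalgebra `M`: elements of `M` centralizing `M`. -/
def centerOf (A : LeibnizAlg F L) (M : Submodule F L) : Submodule F L :=
  M ⊓ A.centralizer M

/-- `N` is the nilradical: the largest nilpotent ideal. -/
def IsNilradical (A : LeibnizAlg F L) (N : Submodule F L) : Prop :=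
  A.IsIdeal N ∧ A.IsNilpotentSub N ∧
    ∀ I : Submodule F L, A.IsIdeal I → A.IsNilpotentSub I → I ≤ N

/-- A minimal ideal: a nonzero ideal containing no ideal other than `0` and itself. -/
def IsMinimalIdeal (A : LeibnizAlg F L) (I : Submodule F L) : Prop :=
  A.IsIdeal I ∧ I ≠ ⊥ ∧ ∀ J : Submodule F L, A.IsIdeal J → J ≤ I → J = ⊥ ∨ J = I

/-- A maximal subalgebra. -/
def IsMaximalSubalgebra (A : LeibnizAlg F L) (M : Submodule F L) : Prop :=
  A.IsSubalgebra M ∧ M ≠ ⊤ ∧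
    ∀ S : Submodule F L, A.IsSubalgebra S → M ≤ S → S = M ∨ S = ⊤

/-- `L` is φ-free: every ideal contained in all maximal subalgebras is zero. -/
def IsPhiFree (A : LeibnizAlg F L) : Prop :=
  ∀ I : Submodule F L, A.IsIdeal I →
    (∀ M : Submodule F L, A.IsMaximalSubalgebra M → I ≤ M) → I = ⊥

/-- `Asoc L`: the sum of the abelian minimal ideals. -/
def asoc (A : LeibnizAlg F L) : Submodule F L :=
  sSup {I : Submodule F L | A.IsMinimalIdeal I ∧ A.IsAbelian I}

/-- A Cartan subalgebra: a nilpotent, self-normalizing subalgebra. -/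
def IsCartan (A : LeibnizAlg F L) (C : Submodule F L) : Prop :=
  A.IsSubalgebra C ∧ A.IsNilpotentSub C ∧
    ∀ x : L, (∀ c ∈ C, A.bracket x c ∈ C ∧ A.bracket c x ∈ C) → x ∈ C

/-- A maximal nilpotent subalgebra. -/
def IsMaxNilpotentSubalgebra (A : LeibnizAlg F L) (U : Submodule F L) : Prop :=
  A.IsSubalgebra U ∧ A.IsNilpotentSub U ∧
    ∀ V : Submodule F L, A.IsSubalgebra V → A.IsNilpotentSub V → U ≤ V → V = U

end LeibnizAlg

attribute [local instance 100] LieRing.ofAssociativeRing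

namespace LeibnizAlg

section Aux

variable {F L : Type*} [Field F] [AddCommGroup L] [Module F L]

lemma mem_prod (A : LeibnizAlg F L) {M N : Submodule F L} {m n : L}
    (hm : m ∈ M) (hn : n ∈ N) : A.bracket m n ∈ A.prod M N :=
  Submodule.subset_span ⟨m, hm, n, hn, rfl⟩

lemma prod_le (A : LeibnizAlg F L) {M N P : Submodule F L}
    (h : ∀ m ∈ M, ∀ n ∈ N, A.bracket m n ∈ P) : A.prod M N ≤ P := by
  refine Submodule.span_le.mpr ?_
  rintro z ⟨m, hm, n, hn, rfl⟩
  exact h m hm n hn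

lemma prod_mono (A : LeibnizAlg F L) {M M' N N' : Submodule F L}
    (h1 : M ≤ M') (h2 : N ≤ N') : A.prod M N ≤ A.prod M' N' :=
  A.prod_le fun m hm n hn => A.mem_prod (h1 hm) (h2 hn)

lemma prod_sup_le_left (A : LeibnizAlg F L) (M M' N : Submodule F L) :
    A.prod (M ⊔ M') N ≤ A.prod M N ⊔ A.prod M' N := by
  refine A.prod_le fun m hm n hn => ?_
  obtain ⟨a, ha, b, hb, rfl⟩ := Submodule.mem_sup.mp hm
  rw [map_add, LinearMap.add_apply]
  exact add_mem (Submodule.mem_sup_left (A.mem_prod ha hn))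
    (Submodule.mem_sup_right (A.mem_prod hb hn))

lemma prod_sup_le_right (A : LeibnizAlg F L) (M N N' : Submodule F L) :
    A.prod M (N ⊔ N') ≤ A.prod M N ⊔ A.prod M N' := by
  refine A.prod_le fun m hm n hn => ?_
  obtain ⟨a, ha, b, hb, rfl⟩ := Submodule.mem_sup.mp hn
  rw [map_add]
  exact add_mem (Submodule.mem_sup_left (A.mem_prod hm ha))
    (Submodule.mem_sup_right (A.mem_prod hm hb))

lemma prod_bot_left (A : LeibnizAlg F L) (N : Submodule F L) : A.prod ⊥ N = ⊥ := by
  refine le_antisymm (A.prod_le fun m hm n _ => ?_) bot_le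
  rw [Submodule.mem_bot] at hm
  subst hm
  simp

lemma bracket_mem_der (A : LeibnizAlg F L) (x y : L) : A.bracket x y ∈ A.derSeries 1 :=
  A.mem_prod trivial trivial

lemma prod_le_der (A : LeibnizAlg F L) (M N : Submodule F L) :
    A.prod M N ≤ A.derSeries 1 :=
  A.prod_le fun x _ y _ => A.bracket_mem_der x y

lemma br_br_zero {A : LeibnizAlg F L} (hmeta : A.derSeries 2 = ⊥) {b c : L}
    (hb : b ∈ A.derSeries 1) (hc : c ∈ A.derSeries 1) : A.bracket b c = 0 := by
  have h : A.bracket b c ∈ A.derSeries 2 := A.mem_prod hb hc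
  rw [hmeta, Submodule.mem_bot] at h
  exact h

/-- Right multiplications by arbitrary elements commute on `L²`. -/
lemma br_comm {A : LeibnizAlg F L} (hmeta : A.derSeries 2 = ⊥) {b : L}
    (hb : b ∈ A.derSeries 1) (x y : L) :
    A.bracket (A.bracket b x) y = A.bracket (A.bracket b y) x := by
  have h := A.leibniz b x y
  rw [br_br_zero hmeta hb (A.bracket_mem_der x y)] at h
  exact sub_eq_zero.mp h.symm

/-- Left multiplications commute with right multiplications on `L²`. -/
lemma br_left_swap {A : LeibnizAlg F L} (hmeta : A.derSeries 2 = ⊥) {b : L}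
    (hb : b ∈ A.derSeries 1) (x u : L) :
    A.bracket x (A.bracket b u) = A.bracket (A.bracket x b) u := by
  have h := A.leibniz x b u
  rw [br_br_zero hmeta (A.bracket_mem_der x u) hb, sub_zero] at h
  exact h

/-- Right multiplication by `x`, as an endomorphism of `L²`. -/
noncomputable def rhoE (A : LeibnizAlg F L) (x : L) : Module.End F ↥(A.derSeries 1) :=
  (A.bracket.flip x).restrict fun b _ => A.bracket_mem_der b x

@[simp] lemma rhoE_apply_coe (A : LeibnizAlg F L) (x : L) (b : ↥(A.derSeries 1)) :
    (A.rhoE x b : L) = A.bracket b x := rfl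

/-- Left multiplication by `x`, as an endomorphism of `L²`. -/
noncomputable def lamE (A : LeibnizAlg F L) (x : L) : Module.End F ↥(A.derSeries 1) :=
  (A.bracket x).restrict fun b _ => A.bracket_mem_der x b

@[simp] lemma lamE_apply_coe (A : LeibnizAlg F L) (x : L) (b : ↥(A.derSeries 1)) :
    (A.lamE x b : L) = A.bracket x b := rfl

/-- `rhoE` as a linear map. -/
noncomputable def rhoL (A : LeibnizAlg F L) : L →ₗ[F] Module.End F ↥(A.derSeries 1) where
  toFun := A.rhoE
  map_add' x y := by
    ext b
    show (A.rhoE (x + y) b : L) = (A.rhoE x b + A.rhoE y b : ↥(A.derSeries 1))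
    rw [Submodule.coe_add, rhoE_apply_coe, rhoE_apply_coe, rhoE_apply_coe, map_add]
  map_smul' c x := by
    ext b
    show (A.rhoE (c • x) b : L) = (c • A.rhoE x b : ↥(A.derSeries 1))
    rw [Submodule.coe_smul, rhoE_apply_coe, rhoE_apply_coe, map_smul]

@[simp] lemma rhoL_apply (A : LeibnizAlg F L) (x : L) : A.rhoL x = A.rhoE x := rfl

/-- The image of `U` under `rhoL`, an abelian Lie subalgebra of `End (L²)`. -/
noncomputable def Tsub (A : LeibnizAlg F L) (hmeta : A.derSeries 2 = ⊥)
    (U : Submodule F L) : LieSubalgebra F (Module.End F ↥(A.derSeries 1)) where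
  toSubmodule := Submodule.map A.rhoL U
  lie_mem' := by
    intro f g hf hg
    obtain ⟨u, _, rfl⟩ := hf
    obtain ⟨v, _, rfl⟩ := hg
    have h : ⁅A.rhoL u, A.rhoL v⁆ = 0 := by
      rw [Ring.lie_def]
      rw [sub_eq_zero]
      ext b
      show ((A.rhoE u * A.rhoE v) b : L) = ((A.rhoE v * A.rhoE u) b : L)
      show (A.rhoE u (A.rhoE v b) : L) = (A.rhoE v (A.rhoE u b) : L)
      rw [rhoE_apply_coe, rhoE_apply_coe, rhoE_apply_coe, rhoE_apply_coe]
      exact br_comm hmeta b.2 v u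
    rw [h]
    exact Submodule.zero_mem _

end Aux

end LeibnizAlg

set_option maxHeartbeats 3200000
set_option maxRecDepth 8000

open LieModule LeibnizAlg

/-- Let `L` be a metabelian Leibniz algebra and `U` a maximal nilpotent
subalgebra of `L`.  Then `U ∩ L²` is an abelian ideal of `L`, and
`L² = (U ∩ L²) ⊕ K` for an ideal `K` of `L` with `[K, U] = K`. -/
theorem maximal_nilpotent_subalgebra_of_metabelian
    {F L : Type*} [Field F] [AddCommGroup L] [Module F L] [FiniteDimensional F L]
    (A : LeibnizAlg F L) (hmeta : A.derSeries 2 = ⊥)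
    (U : Submodule F L) (hU : A.IsMaxNilpotentSubalgebra U) :
    A.IsIdeal (U ⊓ A.derSeries 1) ∧ A.IsAbelian (U ⊓ A.derSeries 1) ∧
    ∃ K : Submodule F L, A.IsIdeal K ∧
      (U ⊓ A.derSeries 1) ⊓ K = ⊥ ∧ (U ⊓ A.derSeries 1) ⊔ K = A.derSeries 1 ∧
      A.prod (U ⊓ A.derSeries 1) K = ⊥ ∧ A.prod K (U ⊓ A.derSeries 1) = ⊥ ∧
      A.prod K U = K := by
  classical
  obtain ⟨hUsub, hUnil, hUmax⟩ := hU
  have hBB : A.prod (A.derSeries 1) (A.derSeries 1) = ⊥ := hmeta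
  set T : LieSubalgebra F (Module.End F ↥(A.derSeries 1)) := A.Tsub hmeta U with hTdef
  have memT : ∀ t : T, ∃ u ∈ U, A.rhoL u = t.val := fun t => Submodule.mem_map.mp t.2
  have rho_memT : ∀ u ∈ U, A.rhoL u ∈ T := fun u hu => Submodule.mem_map_of_mem hu
  haveI : IsLieAbelian T := by
    constructor
    intro x m
    obtain ⟨u, hu, hux⟩ := memT x
    obtain ⟨v, hv, hvm⟩ := memT m
    have h : ⁅x.val, m.val⁆ = 0 := by
      rw [← hux, ← hvm, Ring.lie_def, sub_eq_zero]
      ext b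
      show (A.rhoE u (A.rhoE v b) : L) = (A.rhoE v (A.rhoE u b) : L)
      rw [rhoE_apply_coe, rhoE_apply_coe, rhoE_apply_coe, rhoE_apply_coe]
      exact br_comm hmeta b.2 v u
    exact Subtype.ext (by rw [LieSubalgebra.coe_bracket, h]; rfl)
  -- the Fitting components
  set W0 : LieSubmodule F T ↥(A.derSeries 1) :=
    LieModule.genWeightSpace ↥(A.derSeries 1) (0 : T → F) with hW0def
  set W1 : LieSubmodule F T ↥(A.derSeries 1) :=
    LieModule.posFittingComp F T ↥(A.derSeries 1) with hW1def
  set B0 : Submodule F L := Submodule.map (A.derSeries 1).subtype W0.toSubmodule with hB0def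
  set K : Submodule F L := Submodule.map (A.derSeries 1).subtype W1.toSubmodule with hKdef
  have memmap : ∀ (Wm : Submodule F ↥(A.derSeries 1)) (z : L),
      z ∈ Submodule.map (A.derSeries 1).subtype Wm ↔
        ∃ h : z ∈ A.derSeries 1, (⟨z, h⟩ : ↥(A.derSeries 1)) ∈ Wm := by
    intro Wm z
    constructor
    · rintro ⟨m, hm, rfl⟩
      exact ⟨m.2, hm⟩
    · rintro ⟨h, hm⟩
      exact ⟨⟨z, h⟩, hm, rfl⟩
  -- pointwise commutation facts
  have comm_rho : ∀ (x u : L) (m : ↥(A.derSeries 1)),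
      A.rhoE u (A.rhoE x m) = A.rhoE x (A.rhoE u m) := by
    intro x u m
    apply Subtype.ext
    show A.bracket (A.bracket m x) u = A.bracket (A.bracket m u) x
    exact br_comm hmeta m.2 x u
  have comm_lam : ∀ (x u : L) (m : ↥(A.derSeries 1)),
      A.rhoE u (A.lamE x m) = A.lamE x (A.rhoE u m) := by
    intro x u m
    apply Subtype.ext
    show A.bracket (A.bracket x m) u = A.bracket x (A.bracket m u)
    exact (br_left_swap hmeta m.2 x u).symm
  -- any endomorphism commuting with all right multiplications preserves W0 and W1
  have pres : ∀ f : Module.End F ↥(A.derSeries 1),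
      (∀ (u : L) (m : ↥(A.derSeries 1)), A.rhoE u (f m) = f (A.rhoE u m)) →
      (∀ m ∈ W0, f m ∈ W0) ∧ (∀ m ∈ W1, f m ∈ W1) := by
    intro f hf
    have hft : ∀ (t : T) (m : ↥(A.derSeries 1)), t.val (f m) = f (t.val m) := by
      intro t m
      obtain ⟨u, hu, hval⟩ := memT t
      rw [← hval]
      exact hf u m
    have hftpow : ∀ (t : T) (k : ℕ) (m : ↥(A.derSeries 1)),
        (t.val ^ k) (f m) = f ((t.val ^ k) m) := by
      intro t k
      induction k with
      | zero => intro m; simp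
      | succ k ih =>
        intro m
        rw [pow_succ']
        show t.val ((t.val ^ k) (f m)) = f (t.val ((t.val ^ k) m))
        rw [ih m, hft]
    constructor
    · intro m hm
      rw [hW0def, LieModule.mem_genWeightSpace] at hm ⊢
      intro t
      obtain ⟨k, hk⟩ := hm t
      refine ⟨k, ?_⟩
      simp only [Pi.zero_apply, zero_smul, sub_zero] at hk ⊢
      show ((t.val) ^ k) (f m) = 0
      have hk' : ((t.val) ^ k) m = 0 := hk
      rw [hftpow, hk', map_zero]
    · intro m hm
      have hlcs : ∀ k, ∀ m' ∈ LieModule.lowerCentralSeries F T ↥(A.derSeries 1) k,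
          f m' ∈ LieModule.lowerCentralSeries F T ↥(A.derSeries 1) k := by
        intro k
        induction k with
        | zero => intro m' _; trivial
        | succ k ih =>
          intro m' hm'
          rw [LieModule.lowerCentralSeries_succ] at hm' ⊢
          rw [← LieSubmodule.mem_toSubmodule, LieSubmodule.lieIdeal_oper_eq_linear_span'] at hm'
          induction hm' using Submodule.span_induction with
          | mem z hz =>
            obtain ⟨x, -, n, hn, rfl⟩ := hz
            have hx : f ⁅x, n⁆ = ⁅x, f n⁆ := (hft x n).symm
            rw [hx]
            exact LieSubmodule.lie_mem_lie trivial (ih n hn)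
          | zero => simp
          | add a b _ _ ha hb => rw [map_add]; exact add_mem ha hb
          | smul c a _ ha => rw [map_smul]; exact Submodule.smul_mem _ c ha
      rw [hW1def, ← iInf_lowerCentralSeries_eq_posFittingComp,
        LieSubmodule.mem_iInf] at hm ⊢
      exact fun k => hlcs k m (hm k)
  have pres_rho := fun x : L => pres (A.rhoE x) (fun u m => comm_rho x u m)
  have pres_lam := fun x : L => pres (A.lamE x) (fun u m => comm_lam x u m)
  -- invariance of B0 and K under all left and right multiplications
  have hB0_rho : ∀ (x : L), ∀ z ∈ B0, A.bracket z x ∈ B0 := by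
    intro x z hz
    obtain ⟨h, hm⟩ := (memmap _ z).mp hz
    exact (memmap _ _).mpr ⟨A.bracket_mem_der z x, (pres_rho x).1 _ hm⟩
  have hB0_lam : ∀ (x : L), ∀ z ∈ B0, A.bracket x z ∈ B0 := by
    intro x z hz
    obtain ⟨h, hm⟩ := (memmap _ z).mp hz
    exact (memmap _ _).mpr ⟨A.bracket_mem_der x z, (pres_lam x).1 _ hm⟩
  have hK_rho : ∀ (x : L), ∀ z ∈ K, A.bracket z x ∈ K := by
    intro x z hz
    obtain ⟨h, hm⟩ := (memmap _ z).mp hz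
    exact (memmap _ _).mpr ⟨A.bracket_mem_der z x, (pres_rho x).2 _ hm⟩
  have hK_lam : ∀ (x : L), ∀ z ∈ K, A.bracket x z ∈ K := by
    intro x z hz
    obtain ⟨h, hm⟩ := (memmap _ z).mp hz
    exact (memmap _ _).mpr ⟨A.bracket_mem_der x z, (pres_lam x).2 _ hm⟩
  have hB0_le_B : B0 ≤ A.derSeries 1 := Submodule.map_subtype_le _ _
  have hK_le_B : K ≤ A.derSeries 1 := Submodule.map_subtype_le _ _
  -- U ⊓ L² ≤ B0
  have hUB_le_B0 : U ⊓ A.derSeries 1 ≤ B0 := by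
    intro z hz
    rw [memmap]
    refine ⟨hz.2, ?_⟩
    rw [LieSubmodule.mem_toSubmodule, LieModule.mem_genWeightSpace]
    intro t
    obtain ⟨u, hu, hval⟩ := memT t
    obtain ⟨n, hn⟩ := hUnil
    refine ⟨n, ?_⟩
    simp only [Pi.zero_apply, zero_smul, sub_zero]
    show (t.val ^ n) ⟨z, hz.2⟩ = 0
    rw [← hval]
    have key : ∀ k, (((A.rhoL u ^ k) ⟨z, hz.2⟩ : ↥(A.derSeries 1)) : L) ∈ A.lcs U k := by
      intro k
      induction k with
      | zero => exact hz.1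
      | succ k ih =>
        rw [pow_succ']
        show (A.rhoE u ((A.rhoL u ^ k) ⟨z, hz.2⟩) : L) ∈ A.lcs U (k + 1)
        rw [rhoE_apply_coe]
        exact A.mem_prod ih hu
    have hzn := key n
    rw [hn, Submodule.mem_bot] at hzn
    exact Subtype.ext hzn
  -- the descending chain Q
  set Q : ℕ → Submodule F L := fun k => (fun P => A.prod P U)^[k] B0 with hQdef
  have hQ0 : Q 0 = B0 := rfl
  have hQsucc : ∀ k, Q (k + 1) = A.prod (Q k) U := fun k =>
    Function.iterate_succ_apply' _ k B0
  have hQ_le_B : ∀ k, Q k ≤ A.derSeries 1 := by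
    intro k
    cases k with
    | zero => exact hB0_le_B
    | succ k => rw [hQsucc]; exact A.prod_le_der _ _
  have hQ_bot : ∃ N, Q N = ⊥ := by
    obtain ⟨N, hN⟩ := LieModule.IsNilpotent.nilpotent F T
      ↥(LieModule.genWeightSpace (↥(A.derSeries 1)) (0 : T → F))
    have main : ∀ k, Q k ≤ Submodule.map (A.derSeries 1).subtype
        (Submodule.map (LieModule.genWeightSpace (↥(A.derSeries 1)) (0 : T → F)).toSubmodule.subtype
          (LieModule.lowerCentralSeries F T
            ↥(LieModule.genWeightSpace (↥(A.derSeries 1)) (0 : T → F)) k).toSubmodule) := by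
      intro k
      induction k with
      | zero =>
        rw [hQ0]
        intro z hz
        obtain ⟨h, hm⟩ := (memmap _ z).mp hz
        refine (memmap _ z).mpr ⟨h, Submodule.mem_map.mpr ⟨⟨⟨z, h⟩, hm⟩, ?_, rfl⟩⟩
        simp
      | succ k ih =>
        rw [hQsucc]
        refine le_trans (A.prod_mono ih le_rfl) (A.prod_le ?_)
        rintro m hm u hu
        obtain ⟨h, hm2⟩ := (memmap _ m).mp hm
        obtain ⟨w, hw, hwm⟩ := Submodule.mem_map.mp hm2
        refine (memmap _ _).mpr ⟨A.bracket_mem_der m u, ?_⟩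
        refine Submodule.mem_map.mpr ⟨(show ↥(LieModule.genWeightSpace (↥(A.derSeries 1)) (0 : T → F)) from
          ⁅(⟨A.rhoL u, rho_memT u hu⟩ : T),
          (w : ↥(LieModule.genWeightSpace (↥(A.derSeries 1)) (0 : T → F)))⁆), ?_, ?_⟩
        · show (⁅(⟨A.rhoL u, rho_memT u hu⟩ : T), (w : ↥(LieModule.genWeightSpace (↥(A.derSeries 1)) (0 : T → F)))⁆ : ↥(LieModule.genWeightSpace (↥(A.derSeries 1)) (0 : T → F))) ∈
            LieModule.lowerCentralSeries F T ↥(LieModule.genWeightSpace (↥(A.derSeries 1)) (0 : T → F)) (k + 1)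
          rw [LieModule.lowerCentralSeries_succ]
          exact LieSubmodule.lie_mem_lie (M := ↥(LieModule.genWeightSpace (↥(A.derSeries 1)) (0 : T → F))) trivial hw
        · apply Subtype.ext
          have hwm' : ((w : ↥(A.derSeries 1)) : L) = m := congrArg Subtype.val hwm
          show ((A.rhoE u (w : ↥(A.derSeries 1)) : ↥(A.derSeries 1)) : L) = A.bracket m u
          rw [rhoE_apply_coe, hwm']
    refine ⟨N, le_bot_iff.mp ?_⟩
    refine le_trans (main N) ?_
    rw [hN]
    simp
  -- U ⊔ B0 is a nilpotent subalgebra, hence equals U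
  have hS_sub : A.IsSubalgebra (U ⊔ B0) := by
    refine le_trans (A.prod_sup_le_left _ _ _) (sup_le ?_ ?_)
    · refine le_trans (A.prod_sup_le_right _ _ _) (sup_le ?_ ?_)
      · exact le_trans hUsub le_sup_left
      · exact le_trans (A.prod_le fun m hm n hn => hB0_lam m n hn) le_sup_right
    · refine le_trans (A.prod_sup_le_right _ _ _) (sup_le ?_ ?_)
      · exact le_trans (A.prod_le fun m hm n hn => hB0_rho n m hm) le_sup_right
      · exact le_trans (A.prod_le fun m hm n hn => hB0_rho n m hm) le_sup_right
  have hS_lcs : ∀ k, A.lcs (U ⊔ B0) (k + 1) ≤ A.lcs U (k + 1) ⊔ Q k := by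
    intro k
    induction k with
    | zero =>
      show A.prod (U ⊔ B0) (U ⊔ B0) ≤ A.prod U U ⊔ Q 0
      refine le_trans (A.prod_sup_le_left _ _ _) (sup_le ?_ ?_)
      · refine le_trans (A.prod_sup_le_right _ _ _) (sup_le le_sup_left ?_)
        refine le_trans (A.prod_le fun m hm n hn => hB0_lam m n hn) ?_
        rw [hQ0]; exact le_sup_right
      · refine le_trans (A.prod_sup_le_right _ _ _) (sup_le ?_ ?_) <;>
        · refine le_trans (A.prod_le fun m hm n hn => hB0_rho n m hm) ?_
          rw [hQ0]; exact le_sup_right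
    | succ k ih =>
      show A.prod (A.lcs (U ⊔ B0) (k + 1)) (U ⊔ B0) ≤ A.lcs U (k + 2) ⊔ Q (k + 1)
      refine le_trans (A.prod_mono ih le_rfl) ?_
      refine le_trans (A.prod_sup_le_right _ _ _) (sup_le ?_ ?_)
      · refine le_trans (A.prod_sup_le_left _ _ _) (sup_le ?_ ?_)
        · exact le_sup_left
        · rw [hQsucc]; exact le_trans (A.prod_mono le_rfl le_rfl) le_sup_right
      · have hle : A.prod (A.lcs U (k + 1) ⊔ Q k) B0 ≤ A.prod (A.derSeries 1) (A.derSeries 1) := by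
          refine A.prod_mono (sup_le ?_ ?_) hB0_le_B
          · exact A.prod_le_der _ _
          · exact hQ_le_B k
        rw [hBB] at hle
        exact le_trans hle bot_le
  have hS_nil : A.IsNilpotentSub (U ⊔ B0) := by
    obtain ⟨n, hn⟩ := hUnil
    obtain ⟨N, hN⟩ := hQ_bot
    have hU_bot : ∀ m, n ≤ m → A.lcs U m = ⊥ := by
      intro m hm
      induction m with
      | zero =>
        have h0 : n = 0 := Nat.le_zero.mp hm
        rw [← h0]; exact hn
      | succ m ih =>
        rcases Nat.lt_or_ge n (m + 1) with h | h
        · have hmle := ih (by omega)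
          show A.prod (A.lcs U m) U = ⊥
          rw [hmle, A.prod_bot_left]
        · have : m + 1 = n := le_antisymm h hm
          rw [this]; exact hn
    have hQ_bot' : ∀ m, N ≤ m → Q m = ⊥ := by
      intro m hm
      induction m with
      | zero =>
        have h0 : N = 0 := Nat.le_zero.mp hm
        rw [← h0]; exact hN
      | succ m ih =>
        rcases Nat.lt_or_ge N (m + 1) with h | h
        · have hmle := ih (by omega)
          rw [hQsucc, hmle, A.prod_bot_left]
        · have : m + 1 = N := le_antisymm h hm
          rw [this]; exact hN
    refine ⟨n + N + 1, ?_⟩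
    have h1 := hS_lcs (n + N)
    have h2 : A.lcs U (n + N + 1) = ⊥ := hU_bot _ (by omega)
    have h3 : Q (n + N) = ⊥ := hQ_bot' _ (by omega)
    rw [h2, h3, sup_idem] at h1
    exact le_bot_iff.mp h1
  have hSU : U ⊔ B0 = U := hUmax _ hS_sub hS_nil le_sup_left
  have hB0_le_U : B0 ≤ U := by rw [← hSU]; exact le_sup_right
  have hUB0 : U ⊓ A.derSeries 1 = B0 := le_antisymm hUB_le_B0 (le_inf hB0_le_U hB0_le_B)
  have hcompl := LieModule.isCompl_genWeightSpace_zero_posFittingComp F T ↥(A.derSeries 1)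
  rw [hUB0]
  refine ⟨?_, ?_, K, ?_, ?_, ?_, ?_, ?_, ?_⟩
  · exact ⟨A.prod_le fun m hm x _ => hB0_rho x m hm,
      A.prod_le fun x _ m hm => hB0_lam x m hm⟩
  · exact le_antisymm (le_trans (A.prod_mono hB0_le_B hB0_le_B) hBB.le) bot_le
  · exact ⟨A.prod_le fun m hm x _ => hK_rho x m hm,
      A.prod_le fun x _ m hm => hK_lam x m hm⟩
  · rw [hB0def, hKdef, ← Submodule.map_inf _ (Submodule.injective_subtype _),
      ← LieSubmodule.inf_toSubmodule, hcompl.inf_eq_bot, LieSubmodule.bot_toSubmodule,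
      Submodule.map_bot]
  · rw [hB0def, hKdef, ← Submodule.map_sup, ← LieSubmodule.sup_toSubmodule,
      hcompl.sup_eq_top, LieSubmodule.top_toSubmodule, Submodule.map_top,
      Submodule.range_subtype]
  · exact le_antisymm (le_trans (A.prod_mono hB0_le_B hK_le_B) hBB.le) bot_le
  · exact le_antisymm (le_trans (A.prod_mono hK_le_B hB0_le_B) hBB.le) bot_le
  · refine le_antisymm (A.prod_le fun m hm u hu => hK_rho u m hm) ?_
    have hstab : W1 = ⁅(⊤ : LieIdeal F T), W1⁆ := by
      obtain ⟨n, hn⟩ := Filter.eventually_atTop.mp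
        (LieModule.eventually_iInf_lowerCentralSeries_eq F T ↥(A.derSeries 1))
      rw [hW1def]
      conv_lhs => rw [← LieModule.iInf_lowerCentralSeries_eq_posFittingComp,
        hn (n + 1) (by omega), LieModule.lowerCentralSeries_succ]
      rw [← hn n le_rfl, LieModule.iInf_lowerCentralSeries_eq_posFittingComp]
    intro z hz
    obtain ⟨h, hm⟩ := (memmap _ z).mp hz
    have hm' : (⟨z, h⟩ : ↥(A.derSeries 1)) ∈ ⁅(⊤ : LieIdeal F T), W1⁆ := by
      rw [← hstab]; exact hm
    rw [← LieSubmodule.mem_toSubmodule, LieSubmodule.lieIdeal_oper_eq_linear_span'] at hm'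
    have hall : ∀ m ∈ Submodule.span F
        {m : ↥(A.derSeries 1) | ∃ x ∈ (⊤ : LieIdeal F T), ∃ n ∈ W1, ⁅x, n⁆ = m},
        (m : L) ∈ A.prod K U := by
      intro m hmm
      induction hmm using Submodule.span_induction with
      | mem y hy =>
        obtain ⟨x, -, n, hn, rfl⟩ := hy
        obtain ⟨u, hu, hval⟩ := memT x
        have hcoe : ((⁅x, n⁆ : ↥(A.derSeries 1)) : L) = ((x.val n : ↥(A.derSeries 1)) : L) := rfl
        rw [hcoe, ← hval]
        have hcoe2 : ((A.rhoL u n : ↥(A.derSeries 1)) : L) = A.bracket (n : L) u := rfl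
        rw [hcoe2]
        exact A.mem_prod (Submodule.mem_map.mpr ⟨n, hn, rfl⟩) hu
      | zero => simp
      | add a b _ _ ha hb => rw [Submodule.coe_add]; exact add_mem ha hb
      | smul c a _ ha => rw [Submodule.coe_smul]; exact Submodule.smul_mem _ c ha
    exact hall _ hm'
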